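/- Define f(p,q) = −p²/(4q) − 2√q, g(p,q) = p/√q, h(p,q) = −2√q for q > 0. Let v, w : ℝ³ → ℝ be continuously differentiable functions of (t,x,y) with w > 0 everywhere, and set P = −2v/w², Q = 1/w². Then the following pointwise identities hold: f_p(P,Q) = v, g_p(P,Q) = w, h_p(P,Q) = 0, f_q(P,Q) = v² − w, g_q(P,Q) = v w, h_q(P,Q) = −w. Consequently, if (v,w) solves the system (max) (v_t + w_x = 0, w_t + w_y + v w_x − w v_x = 0), then the Godunov-form equations ∂_t(f_p(P,Q)) + ∂_x(g_p(P,Q)) + ∂_y(h_p(P,Q)) = 0 and ∂_t(f_q(P,Q)) + ∂_x(g_q(P,Q)) + ∂_y(h_q(P,Q)) = 0 hold. -/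

import Mathlib

/-- Partial derivative of `f : ℝⁿ → ℝ` in the `i`-th coordinate direction. -/
noncomputable def pd {n : ℕ} (i : Fin n) (f : (Fin n → ℝ) → ℝ) (x : Fin n → ℝ) : ℝ :=
  fderiv ℝ f x (Pi.single i 1)

/-- `f(p,q) = −p²/(4q) − 2√q`. -/
noncomputable def fG (p q : ℝ) : ℝ := -p ^ 2 / (4 * q) - 2 * Real.sqrt q

/-- `g(p,q) = p/√q`. -/
noncomputable def gG (p q : ℝ) : ℝ := p / Real.sqrt q

/-- `h(p,q) = −2√q`. -/
noncomputable def hG (p q : ℝ) : ℝ := -2 * Real.sqrt q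

lemma deriv_fGp (q p : ℝ) (hq : 0 < q) : deriv (fun p => fG p q) p = -p / (2 * q) := by
  have h : HasDerivAt (fun p : ℝ => fG p q) (-p / (2 * q)) p := by
    have h1 : HasDerivAt (fun p : ℝ => -p ^ 2 / (4 * q)) (-p / (2 * q)) p := by
      have := ((hasDerivAt_pow 2 p).neg.div_const (4 * q))
      refine this.congr_deriv ?_
      push_cast
      ring
    simpa [fG] using h1.sub_const (2 * Real.sqrt q)
  exact h.deriv

lemma deriv_gGp (q p : ℝ) : deriv (fun p => gG p q) p = 1 / Real.sqrt q := by
  have h : HasDerivAt (fun p : ℝ => gG p q) (1 / Real.sqrt q) p := by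
    simpa [gG, div_eq_mul_inv, one_div] using (hasDerivAt_id p).div_const (Real.sqrt q)
  exact h.deriv

lemma deriv_hGp (q p : ℝ) : deriv (fun p => hG p q) p = 0 := by
  simp [hG]

lemma deriv_fGq (p q : ℝ) (hq : 0 < q) :
    deriv (fun q => fG p q) q = p ^ 2 / (4 * q ^ 2) - 1 / Real.sqrt q := by
  have hs : Real.sqrt q ≠ 0 := Real.sqrt_ne_zero'.2 hq
  have h1 : HasDerivAt (fun q : ℝ => -p ^ 2 / (4 * q)) (p ^ 2 / (4 * q ^ 2)) q := by
    have h0 : HasDerivAt (fun q : ℝ => 4 * q) 4 q := (hasDerivAt_id q).const_mul 4 |>.congr_deriv (by ring)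
    have h2 := h0.inv (by positivity)
    have h3 := h2.const_mul (-p ^ 2)
    have : (fun q : ℝ => -p ^ 2 * (4 * q)⁻¹) = fun q : ℝ => -p ^ 2 / (4 * q) := by
      funext t; ring
    simp only [Pi.inv_apply] at h3
    rw [this] at h3
    refine h3.congr_deriv ?_
    ring
  have h2 : HasDerivAt (fun q : ℝ => 2 * Real.sqrt q) (2 * (1 / (2 * Real.sqrt q))) q :=
    (Real.hasDerivAt_sqrt hq.ne').const_mul 2
  have h := h1.sub h2
  have hval : p ^ 2 / (4 * q ^ 2) - 2 * (1 / (2 * Real.sqrt q))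
      = p ^ 2 / (4 * q ^ 2) - 1 / Real.sqrt q := by field_simp
  rw [hval] at h
  exact ((h.congr_deriv rfl).congr_of_eventuallyEq (Filter.Eventually.of_forall fun t => by
    simp [fG])).deriv

lemma deriv_gGq (p q : ℝ) (hq : 0 < q) :
    deriv (fun q => gG p q) q = -p / (2 * q * Real.sqrt q) := by
  have hs : Real.sqrt q ≠ 0 := Real.sqrt_ne_zero'.2 hq
  have h1 := ((Real.hasDerivAt_sqrt hq.ne').inv hs).const_mul p
  have h : HasDerivAt (fun q => gG p q) (-p / (2 * q * Real.sqrt q)) q := by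
    have : (fun q : ℝ => p * (Real.sqrt q)⁻¹) = fun q : ℝ => gG p q := by
      funext t; simp [gG, div_eq_mul_inv]
    simp only [Pi.inv_apply] at h1
    rw [this] at h1
    have hval : p * (-(1 / (2 * Real.sqrt q)) / Real.sqrt q ^ 2) = -p / (2 * q * Real.sqrt q) := by
      rw [Real.sq_sqrt hq.le]
      ring
    rwa [hval] at h1
  exact h.deriv

lemma deriv_hGq (p q : ℝ) (hq : 0 < q) :
    deriv (fun q => hG p q) q = -1 / Real.sqrt q := by
  have hs : Real.sqrt q ≠ 0 := Real.sqrt_ne_zero'.2 hq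
  have h := (Real.hasDerivAt_sqrt hq.ne').const_mul (-2 : ℝ)
  have h' : HasDerivAt (fun q => hG p q) (-1 / Real.sqrt q) q := by
    have : (fun q : ℝ => (-2 : ℝ) * Real.sqrt q) = fun q : ℝ => hG p q := by
      funext t; simp [hG]
    rw [this] at h
    refine h.congr_deriv ?_
    ring
  exact h'.deriv

lemma sqrt_one_div_sq (b : ℝ) (hb : 0 < b) : Real.sqrt (1 / b ^ 2) = 1 / b := by
  rw [show (1 / b ^ 2 : ℝ) = (1 / b) ^ 2 by ring, Real.sqrt_sq (by positivity)]

lemma six (a b : ℝ) (hb : 0 < b) :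
    deriv (fun p => fG p (1 / b ^ 2)) (-2 * a / b ^ 2) = a ∧
    deriv (fun p => gG p (1 / b ^ 2)) (-2 * a / b ^ 2) = b ∧
    deriv (fun p => hG p (1 / b ^ 2)) (-2 * a / b ^ 2) = 0 ∧
    deriv (fun q => fG (-2 * a / b ^ 2) q) (1 / b ^ 2) = a ^ 2 - b ∧
    deriv (fun q => gG (-2 * a / b ^ 2) q) (1 / b ^ 2) = a * b ∧
    deriv (fun q => hG (-2 * a / b ^ 2) q) (1 / b ^ 2) = -b := by
  have hq : (0 : ℝ) < 1 / b ^ 2 := by positivity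
  have hs := sqrt_one_div_sq b hb
  have hb' : b ≠ 0 := hb.ne'
  refine ⟨?_, ?_, ?_, ?_, ?_, ?_⟩
  · rw [deriv_fGp _ _ hq]; field_simp
  · rw [deriv_gGp, hs]; field_simp
  · rw [deriv_hGp]
  · rw [deriv_fGq _ _ hq, hs]; field_simp; ring
  · rw [deriv_gGq _ _ hq, hs]; field_simp
  · rw [deriv_hGq _ _ hq, hs]; field_simp

lemma pd_sub {n : ℕ} (i : Fin n) (f g : (Fin n → ℝ) → ℝ) (x : Fin n → ℝ)
    (hf : DifferentiableAt ℝ f x) (hg : DifferentiableAt ℝ g x) :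
    pd i (fun y => f y - g y) x = pd i f x - pd i g x := by
  simp [pd, fderiv_fun_sub hf hg]

lemma pd_mul {n : ℕ} (i : Fin n) (f g : (Fin n → ℝ) → ℝ) (x : Fin n → ℝ)
    (hf : DifferentiableAt ℝ f x) (hg : DifferentiableAt ℝ g x) :
    pd i (fun y => f y * g y) x = pd i f x * g x + f x * pd i g x := by
  simp [pd, fderiv_fun_mul hf hg]
  ring

lemma pd_neg {n : ℕ} (i : Fin n) (f : (Fin n → ℝ) → ℝ) (x : Fin n → ℝ) :
    pd i (fun y => -f y) x = -pd i f x := by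
  simp [pd, fderiv_neg]

lemma pd_const {n : ℕ} (i : Fin n) (c : ℝ) (x : Fin n → ℝ) :
    pd i (fun _ => c) x = 0 := by
  simp [pd]

/-- Coordinates on ℝ³ are `(t,x,y)` with indices `(0,1,2)`.
For C¹ functions `v, w` with `w > 0` and `P = −2v/w²`, `Q = 1/w²`, the identities
`f_p(P,Q) = v`, `g_p(P,Q) = w`, `h_p(P,Q) = 0`, `f_q(P,Q) = v² − w`, `g_q(P,Q) = vw`,
`h_q(P,Q) = −w` hold; consequently solutions of (max) satisfy the Godunov-form equations. -/
theorem stmt7 (v w P Q : (Fin 3 → ℝ) → ℝ) (hv : ContDiff ℝ 1 v) (hw : ContDiff ℝ 1 w)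
    (hwpos : ∀ x, 0 < w x)
    (hP : ∀ x, P x = -2 * v x / (w x) ^ 2) (hQ : ∀ x, Q x = 1 / (w x) ^ 2) :
    (∀ x, deriv (fun p => fG p (Q x)) (P x) = v x ∧
        deriv (fun p => gG p (Q x)) (P x) = w x ∧
        deriv (fun p => hG p (Q x)) (P x) = 0 ∧
        deriv (fun q => fG (P x) q) (Q x) = (v x) ^ 2 - w x ∧
        deriv (fun q => gG (P x) q) (Q x) = v x * w x ∧
        deriv (fun q => hG (P x) q) (Q x) = -w x) ∧
    ((∀ x, pd 0 v x + pd 1 w x = 0 ∧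
        pd 0 w x + pd 2 w x + v x * pd 1 w x - w x * pd 1 v x = 0) →
      (∀ x, pd 0 (fun y => deriv (fun p => fG p (Q y)) (P y)) x
          + pd 1 (fun y => deriv (fun p => gG p (Q y)) (P y)) x
          + pd 2 (fun y => deriv (fun p => hG p (Q y)) (P y)) x = 0 ∧
        pd 0 (fun y => deriv (fun q => fG (P y) q) (Q y)) x
          + pd 1 (fun y => deriv (fun q => gG (P y) q) (Q y)) x
          + pd 2 (fun y => deriv (fun q => hG (P y) q) (Q y)) x = 0)) := by
  have key : ∀ x, deriv (fun p => fG p (Q x)) (P x) = v x ∧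
      deriv (fun p => gG p (Q x)) (P x) = w x ∧
      deriv (fun p => hG p (Q x)) (P x) = 0 ∧
      deriv (fun q => fG (P x) q) (Q x) = (v x) ^ 2 - w x ∧
      deriv (fun q => gG (P x) q) (Q x) = v x * w x ∧
      deriv (fun q => hG (P x) q) (Q x) = -w x := by
    intro x
    rw [hP x, hQ x]
    exact six (v x) (w x) (hwpos x)
  refine ⟨key, ?_⟩
  intro hmax x
  have hdv : Differentiable ℝ v := hv.differentiable one_ne_zero
  have hdw : Differentiable ℝ w := hw.differentiable one_ne_zero
  have E1 : (fun y => deriv (fun p => fG p (Q y)) (P y)) = v := funext fun y => (key y).1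
  have E2 : (fun y => deriv (fun p => gG p (Q y)) (P y)) = w := funext fun y => (key y).2.1
  have E3 : (fun y => deriv (fun p => hG p (Q y)) (P y)) = fun _ => (0 : ℝ) :=
    funext fun y => (key y).2.2.1
  have E4 : (fun y => deriv (fun q => fG (P y) q) (Q y)) = fun y => v y * v y - w y :=
    funext fun y => by rw [(key y).2.2.2.1]; ring
  have E5 : (fun y => deriv (fun q => gG (P y) q) (Q y)) = fun y => v y * w y :=
    funext fun y => (key y).2.2.2.2.1
  have E6 : (fun y => deriv (fun q => hG (P y) q) (Q y)) = fun y => -w y :=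
    funext fun y => (key y).2.2.2.2.2
  rw [E1, E2, E3, E4, E5, E6]
  obtain ⟨h1, h2⟩ := hmax x
  constructor
  · rw [pd_const]
    linarith
  · rw [pd_sub 0 (fun y => v y * v y) _ x ((hdv x).mul (hdv x)) (hdw x),
        pd_mul 0 v v x (hdv x) (hdv x),
        pd_mul 1 v w x (hdv x) (hdw x),
        pd_neg]
    linear_combination 2 * v x * h1 - h2
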